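/- For a ∈ (1,2], set γ(a) = Γ(a)²/Γ(2a-1). Then γ is strictly decreasing on [1,2], γ(1) = 1, γ(2) = 1/2, and γ(a) ∈ [1/2, 1) for a ∈ (1,2]. -/
import Mathlib


open Set

private lemma convexOn_logGamma_shift :
    ConvexOn ℝ (Ioi (0:ℝ)) (fun x => Real.log (Real.Gamma (x + 1))) := by
  refine ⟨convex_Ioi 0, fun x hx y hy a b ha hb hab => ?_⟩
  have hx1 : (x + 1 : ℝ) ∈ Ioi (0:ℝ) := by simp at hx ⊢; linarith
  have hy1 : (y + 1 : ℝ) ∈ Ioi (0:ℝ) := by simp at hy ⊢; linarith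
  have := Real.convexOn_log_Gamma.2 hx1 hy1 ha hb hab
  simp only [Function.comp] at this
  have harg : a • (x + 1) + b • (y + 1) = a • x + b • y + 1 := by
    simp only [smul_eq_mul]; nlinarith [hab]
  rw [harg] at this
  exact this

private lemma strictConvexOn_logGamma :
    StrictConvexOn ℝ (Ioi (0:ℝ)) (fun x => Real.log (Real.Gamma x)) := by
  have hneg : StrictConvexOn ℝ (Ioi (0:ℝ)) (fun x : ℝ => -Real.log x) := by
    exact neg_strictConvexOn_iff.mpr strictConcaveOn_log_Ioi
  have hsum : StrictConvexOn ℝ (Ioi (0:ℝ))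
      (fun x => Real.log (Real.Gamma (x + 1)) + -Real.log x) :=
    convexOn_logGamma_shift.add_strictConvexOn hneg
  have heq : ∀ x ∈ Ioi (0:ℝ),
      Real.log (Real.Gamma (x + 1)) + -Real.log x = Real.log (Real.Gamma x) := by
    intro x hx
    have hx0 : (0:ℝ) < x := hx
    rw [Real.Gamma_add_one (ne_of_gt hx0), Real.log_mul (ne_of_gt hx0)
      (ne_of_gt (Real.Gamma_pos_of_pos hx0))]
    ring
  refine ⟨hsum.1, fun x hx y hy hxy a b ha hb hab => ?_⟩
  have hmem : a • x + b • y ∈ Ioi (0:ℝ) := hsum.1 hx hy ha.le hb.le hab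
  have h2 := hsum.2 hx hy hxy ha hb hab
  simp only [smul_eq_mul] at h2 hmem ⊢
  rw [heq _ hmem, heq _ hx, heq _ hy] at h2
  exact h2

private lemma key_lt {a b : ℝ} (ha : a ∈ Icc (1:ℝ) 2) (hb : b ∈ Icc (1:ℝ) 2)
    (hab : a < b) :
    Real.Gamma b ^ 2 / Real.Gamma (2 * b - 1) < Real.Gamma a ^ 2 / Real.Gamma (2 * a - 1) := by
  obtain ⟨ha1, ha2⟩ := ha
  obtain ⟨hb1, hb2⟩ := hb
  set f : ℝ → ℝ := fun x => Real.log (Real.Gamma x) with hf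
  have hsc := strictConvexOn_logGamma
  have haI : a ∈ Ioi (0:ℝ) := by simp; linarith
  have hbI : b ∈ Ioi (0:ℝ) := by simp; linarith
  have ha'I : (2*a - 1) ∈ Ioi (0:ℝ) := by simp; linarith
  have hb'I : (2*b - 1) ∈ Ioi (0:ℝ) := by simp; linarith
  -- slope (a, b) < slope (a, 2b-1)
  have s1 : (f b - f a) / (b - a) < (f (2*b-1) - f a) / ((2*b-1) - a) :=
    hsc.secant_strict_mono haI hbI hb'I (ne_of_gt hab)
      (by intro h; linarith [h]) (by linarith)
  -- slope (a, 2b-1) ≤ slope (2a-1, 2b-1)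
  have s2 : (f (2*b-1) - f a) / ((2*b-1) - a) ≤
      (f (2*b-1) - f (2*a-1)) / ((2*b-1) - (2*a-1)) := by
    rcases eq_or_lt_of_le ha1 with h1 | h1
    · rw [← h1]; norm_num
    · have := hsc.convexOn.secant_mono hb'I haI ha'I
        (by intro h; linarith [h]) (by intro h; linarith [h]) (by linarith)
      have e1 : (f a - f (2*b-1)) / (a - (2*b-1)) = (f (2*b-1) - f a) / ((2*b-1) - a) := by
        rw [← neg_div_neg_eq]; ring_nf
      have e2 : (f (2*a-1) - f (2*b-1)) / ((2*a-1) - (2*b-1)) =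
          (f (2*b-1) - f (2*a-1)) / ((2*b-1) - (2*a-1)) := by
        rw [← neg_div_neg_eq]; ring_nf
      rw [e1, e2] at this
      exact this
  have hd : (0:ℝ) < b - a := by linarith
  have key : 2 * (f b - f a) < f (2*b-1) - f (2*a-1) := by
    have h := lt_of_lt_of_le s1 s2
    rw [div_lt_div_iff₀ hd (by linarith : (0:ℝ) < (2*b-1) - (2*a-1))] at h
    nlinarith [h]
  -- convert to the ratio statement via exp/log
  have hga := Real.Gamma_pos_of_pos (show (0:ℝ) < a by linarith)
  have hgb := Real.Gamma_pos_of_pos (show (0:ℝ) < b by linarith)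
  have hga' := Real.Gamma_pos_of_pos (show (0:ℝ) < 2*a - 1 by linarith)
  have hgb' := Real.Gamma_pos_of_pos (show (0:ℝ) < 2*b - 1 by linarith)
  have exp_eq : ∀ x : ℝ, 0 < Real.Gamma x → 0 < Real.Gamma (2*x-1) →
      Real.Gamma x ^ 2 / Real.Gamma (2*x-1) = Real.exp (2 * f x - f (2*x-1)) := by
    intro x h1 h2
    rw [Real.exp_sub, hf]
    simp only []
    rw [Real.exp_log h2, show (2:ℝ) * Real.log (Real.Gamma x) =
      Real.log (Real.Gamma x ^ 2) by rw [Real.log_pow]; push_cast; ring,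
      Real.exp_log (by positivity)]
  rw [exp_eq a hga hga', exp_eq b hgb hgb']
  exact Real.exp_lt_exp.mpr (by linarith)

/-- The function `γ(a) = Γ(a)²/Γ(2a-1)` (the probability `P(b₁ < 0)` of leftward bias)
is strictly decreasing on `[1,2]`, with `γ(1) = 1`, `γ(2) = 1/2`, and
`γ(a) ∈ [1/2, 1)` for `a ∈ (1,2]`. -/
theorem gamma_ratio_strictAnti :
    StrictAntiOn (fun a : ℝ => Real.Gamma a ^ 2 / Real.Gamma (2 * a - 1)) (Icc 1 2)
    ∧ Real.Gamma (1 : ℝ) ^ 2 / Real.Gamma (2 * (1 : ℝ) - 1) = 1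
    ∧ Real.Gamma (2 : ℝ) ^ 2 / Real.Gamma (2 * (2 : ℝ) - 1) = 1 / 2
    ∧ ∀ a ∈ Ioc (1 : ℝ) 2,
        Real.Gamma a ^ 2 / Real.Gamma (2 * a - 1) ∈ Ico (1 / 2 : ℝ) 1 := by
  have hanti : StrictAntiOn (fun a : ℝ => Real.Gamma a ^ 2 / Real.Gamma (2 * a - 1)) (Icc 1 2) :=
    fun a ha b hb hab => key_lt ha hb hab
  have h1 : Real.Gamma (1 : ℝ) ^ 2 / Real.Gamma (2 * (1 : ℝ) - 1) = 1 := by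
    norm_num [Real.Gamma_one]
  have h2 : Real.Gamma (2 : ℝ) ^ 2 / Real.Gamma (2 * (2 : ℝ) - 1) = 1 / 2 := by
    have g2 : Real.Gamma (2 : ℝ) = 1 := by
      rw [show (2:ℝ) = 1 + 1 by norm_num, Real.Gamma_add_one one_ne_zero, Real.Gamma_one]
      ring
    have g3 : Real.Gamma (3 : ℝ) = 2 := by
      rw [show (3:ℝ) = 2 + 1 by norm_num, Real.Gamma_add_one two_ne_zero, g2]
      ring
    norm_num [g2, g3]
  refine ⟨hanti, h1, h2, fun a ha => ?_⟩
  obtain ⟨ha1, ha2⟩ := ha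
  constructor
  · rcases eq_or_lt_of_le ha2 with h | h
    · rw [h]; rw [h2]
    · have := key_lt (a := a) (b := 2) ⟨ha1.le, ha2⟩ ⟨by norm_num, le_refl 2⟩ h
      rw [show (2:ℝ)*2-1 = 2*(2:ℝ)-1 by ring, h2] at this; linarith
  · have := key_lt (a := 1) (b := a) ⟨le_refl 1, by norm_num⟩ ⟨ha1.le, ha2⟩ ha1
    rw [show (2:ℝ)*1-1 = 2*(1:ℝ)-1 by ring, h1] at this; linarith
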